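/- The reverse order ⟨T_α, >_α⟩ is well-founded and its rank function d_α takes values in ω, i.e., every element of T_α has only finitely many elements above it in <_α. -/

import Mathlib

open Cardinal Ordinal

/-- The poset `T α`: strictly decreasing finite lists of ordinals `< α`, ordered by
reverse strict-prefix; the empty list is the top element, and the lists starting with `β`
form the copy of `T β`. -/
def TT (α : Ordinal) : Type 1 :=
  {l : List Ordinal // l.Pairwise (· > ·) ∧ ∀ x ∈ l, x < α}

instance instPOTT (α : Ordinal) : PartialOrder (TT α) where
  le u v := v.1 <+: u.1
  le_refl u := List.prefix_refl _
  le_trans _ _ _ h1 h2 := List.IsPrefix.trans h2 h1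
  le_antisymm _ _ h1 h2 :=
    Subtype.ext (List.IsPrefix.eq_of_length h2 ((List.IsPrefix.length_le h2).antisymm (List.IsPrefix.length_le h1)))

/-- The top element of `T α`. -/
def topT (α : Ordinal) : TT α := ⟨[], by simp, by simp⟩

/-- The rank function of the reversed order `⟨T α, >⟩`. -/
def dT {α : Ordinal} (v : TT α) : ℕ := v.1.length

/-- The rank function of `⟨T α, <⟩`; the top element has rank `α`. -/
def rT {α : Ordinal} (v : TT α) : Ordinal := v.1.getLastD α

/-- The graph `G_α` on `T α`: `u ~ v` iff `u, v` are comparable and `d u ~_G d v`. -/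
def Gg (G : SimpleGraph ℕ) (α : Ordinal) : SimpleGraph (TT α) where
  Adj u v := u ≠ v ∧ (u ≤ v ∨ v ≤ u) ∧ G.Adj (dT u) (dT v)
  symm := ⟨fun _ _ h => ⟨Ne.symm h.1, h.2.1.symm, h.2.2.symm⟩⟩
  loopless := ⟨fun _ h => h.1 rfl⟩

/-- The one-way infinite path `P_ω` on `ℕ`. -/
def rayG : SimpleGraph ℕ := SimpleGraph.fromRel (fun m n => n = m + 1)

/-- `A` is a (not necessarily induced) subgraph of `B`. -/
def SubCopy {X Y : Type*} (A : SimpleGraph X) (B : SimpleGraph Y) : Prop :=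
  ∃ f : X ↪ Y, ∀ u v, A.Adj u v → B.Adj (f u) (f v)

/-- `R` is (isomorphic to) the countable random graph: the extension property. -/
def IsRado (R : SimpleGraph ℕ) : Prop :=
  ∀ A B : Finset ℕ, Disjoint A B →
    ∃ v, v ∉ A ∧ v ∉ B ∧ (∀ a ∈ A, R.Adj v a) ∧ (∀ b ∈ B, ¬R.Adj v b)

/-- An `(s, ξ)`-embedding: an induced embedding of some `G_α`, `ξ ≤ α < λ⁺`, into `H`
whose image contains `s` as the top part of a chain with `d`-values `0, …, n` and whose
last vertex has rank `> ξ`. -/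
def IsSXEmb {V : Type} (G : SimpleGraph ℕ) (lam : Cardinal) (H : SimpleGraph V)
    (s : List V) (ξ : Ordinal) : Prop :=
  ∃ α : Ordinal, ξ ≤ α ∧ α < (Order.succ lam).ord ∧
    ∃ (f : Gg G α ↪g H) (t : List (TT α)),
      s = t.map ⇑f ∧
      (∀ i : Fin t.length, dT (t.get i) = i.1) ∧
      (∀ u ∈ t, ∀ v ∈ t, u ≤ v ∨ v ≤ u) ∧
      (∀ v ∈ t.getLast?, ξ < rT v)

/-- The set `U` of finite sequences admitting `(s, ξ)`-embeddings for all `ξ < λ⁺`. -/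
def UU {V : Type} (G : SimpleGraph ℕ) (lam : Cardinal) (H : SimpleGraph V) :
    Set (List V) :=
  {s | ∀ ξ < (Order.succ lam).ord, IsSXEmb G lam H s ξ}


section aux
variable {α : Ordinal}

lemma gt_imp_len {u v : TT α} (h : (· > ·) u v) : dT u < dT v := by
  obtain ⟨h1, h2⟩ := lt_iff_le_and_ne.mp h
  have hp : u.1 <+: v.1 := h1
  refine lt_of_le_of_ne hp.length_le ?_
  intro hl
  exact h2 (Subtype.ext (hp.eq_of_length hl)).symm

lemma wfT : WellFounded ((· > ·) : TT α → TT α → Prop) :=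
  Subrelation.wf (fun {a b} h => gt_imp_len h) (InvImage.wf dT (Nat.lt_wfRel).wf)

lemma TT_rank_le (v : TT α) (h : Acc ((· > ·) : TT α → TT α → Prop) v) :
    h.rank ≤ (dT v : Ordinal) := by
  induction h with
  | intro v hacc ih =>
    rw [Acc.rank_eq]
    apply Ordinal.iSup_le
    rintro ⟨b, hb⟩
    rw [Order.succ_le_iff]
    refine lt_of_le_of_lt (ih b hb) ?_
    exact_mod_cast gt_imp_len hb

end aux

/-- the reversed order `⟨T α, >⟩` is well-founded, its rank function takes
values in `ω`, i.e. every element has only finitely many elements above it. -/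
theorem stmt3 (α : Ordinal) :
    ∃ h : WellFounded ((· > ·) : TT α → TT α → Prop),
      (∀ v : TT α, (h.apply v).rank < Ordinal.omega0) ∧
      (∀ v : TT α, {u : TT α | v < u}.Finite) := by
  refine ⟨wfT, fun v => ?_, fun v => ?_⟩
  · exact lt_of_le_of_lt (TT_rank_le v _) (Ordinal.nat_lt_omega0 _)
  · apply Set.Finite.of_finite_image (f := dT)
    · apply Set.Finite.subset (Set.finite_Icc 0 (dT v))
      rintro n ⟨u, hu, rfl⟩
      exact ⟨Nat.zero_le _, (gt_imp_len hu).le⟩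
    · rintro u hu w hw hl
      have hpu : u.1 <+: v.1 := le_of_lt (show v < u from hu)
      have hpw : w.1 <+: v.1 := le_of_lt (show v < w from hw)
      rcases List.prefix_or_prefix_of_prefix hpu hpw with h | h
      · exact Subtype.ext (h.eq_of_length hl)
      · exact Subtype.ext (h.eq_of_length hl.symm).symm
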